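/- Let ||·|| be a unitarily invariant norm on n×n matrices with ||E_11|| = 1 and ||E_11 + ... + E_kk|| = k. Then for every n×n matrix B, the sum of the k largest singular values of B is at most ||B||. -/

import Mathlib

open Matrix ComplexOrder

/-- The (unordered) singular values of a square complex matrix, as the square
roots of the eigenvalues of `Bᴴ B`. -/
noncomputable def svals {n : ℕ} (B : Matrix (Fin n) (Fin n) ℂ) : Fin n → ℝ :=
  fun i => Real.sqrt ((Matrix.posSemidef_conjTranspose_mul_self B).1.eigenvalues i)

/-- The partial identity `E₁₁ + ⋯ + E_kk` in `M_n(ℂ)`. -/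
def partialId (n k : ℕ) : Matrix (Fin n) (Fin n) ℂ :=
  Matrix.of fun i j => if i = j ∧ (i : ℕ) < k then 1 else 0

noncomputable def Matrix.PosSemidef.sqrt {n : ℕ} {A : Matrix (Fin n) (Fin n) ℂ} (hA : A.PosSemidef) :
    Matrix (Fin n) (Fin n) ℂ :=
  hA.1.eigenvectorUnitary.1 * Matrix.diagonal (RCLike.ofReal ∘ Real.sqrt ∘ hA.1.eigenvalues : Fin n → ℂ)
    * star hA.1.eigenvectorUnitary.1

lemma Matrix.PosSemidef.posSemidef_sqrt {n : ℕ} {A : Matrix (Fin n) (Fin n) ℂ} (hA : A.PosSemidef) :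
    hA.sqrt.PosSemidef := by
  unfold Matrix.PosSemidef.sqrt
  have hD : (Matrix.diagonal (RCLike.ofReal ∘ Real.sqrt ∘ hA.1.eigenvalues : Fin n → ℂ)).PosSemidef := by
    rw [posSemidef_diagonal_iff]
    intro i
    simp only [Function.comp_apply]
    exact RCLike.ofReal_nonneg.mpr (Real.sqrt_nonneg _)
  have := hD.mul_mul_conjTranspose_same hA.1.eigenvectorUnitary.1
  simpa [Matrix.star_eq_conjTranspose] using this

lemma Matrix.PosSemidef.sqrt_mul_self {n : ℕ} {A : Matrix (Fin n) (Fin n) ℂ} (hA : A.PosSemidef) :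
    hA.sqrt * hA.sqrt = A := by
  unfold Matrix.PosSemidef.sqrt
  conv_rhs => rw [hA.1.spectral_theorem]
  rw [Unitary.conjStarAlgAut_apply]
  have hu : star hA.1.eigenvectorUnitary.1 * hA.1.eigenvectorUnitary.1 = 1 :=
    Unitary.star_mul_self_of_mem hA.1.eigenvectorUnitary.2
  have hd : Matrix.diagonal (RCLike.ofReal ∘ Real.sqrt ∘ hA.1.eigenvalues : Fin n → ℂ) *
      Matrix.diagonal (RCLike.ofReal ∘ Real.sqrt ∘ hA.1.eigenvalues : Fin n → ℂ) =
      Matrix.diagonal (RCLike.ofReal ∘ hA.1.eigenvalues : Fin n → ℂ) := by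
    rw [Matrix.diagonal_mul_diagonal]
    congr 1
    funext i
    simp only [Function.comp_apply]
    rw [← RCLike.ofReal_mul, Real.mul_self_sqrt (hA.eigenvalues_nonneg i)]
  calc _ = hA.1.eigenvectorUnitary.1 * (Matrix.diagonal (RCLike.ofReal ∘ Real.sqrt ∘ hA.1.eigenvalues : Fin n → ℂ) *
      (star hA.1.eigenvectorUnitary.1 * hA.1.eigenvectorUnitary.1) *
      Matrix.diagonal (RCLike.ofReal ∘ Real.sqrt ∘ hA.1.eigenvalues : Fin n → ℂ)) * star hA.1.eigenvectorUnitary.1 := by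
        simp only [Matrix.mul_assoc]
    _ = _ := by rw [hu, Matrix.mul_one, hd]


lemma toEL_mul {n : ℕ} (M P : Matrix (Fin n) (Fin n) ℂ) (v : EuclideanSpace ℂ (Fin n)) :
    Matrix.toEuclideanLin (M * P) v = Matrix.toEuclideanLin M (Matrix.toEuclideanLin P v) := by
  simp [Matrix.toEuclideanLin_apply, Matrix.mulVec_mulVec]

/-- Polar decomposition. -/
lemma exists_polar {n : ℕ} (B : Matrix (Fin n) (Fin n) ℂ) :
    ∃ U ∈ Matrix.unitaryGroup (Fin n) ℂ,
      B = U * (Matrix.posSemidef_conjTranspose_mul_self B).sqrt := by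
  classical
  have hP := Matrix.posSemidef_conjTranspose_mul_self B
  set P := hP.sqrt with hPdef2
  have hPH : P.IsHermitian := hP.posSemidef_sqrt.1
  set p := Matrix.toEuclideanLin P with hpdef
  set b := Matrix.toEuclideanLin B with hbdef
  have hadj_b : Matrix.toEuclideanLin Bᴴ = LinearMap.adjoint b :=
    Matrix.toEuclideanLin_conjTranspose_eq_adjoint B
  have hadj_p : LinearMap.adjoint p = p := by
    rw [hpdef, ← Matrix.toEuclideanLin_conjTranspose_eq_adjoint, hPH.eq]
  have hPP : P * P = Bᴴ * B := hP.sqrt_mul_self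
  have key : ∀ x, ‖p x‖ = ‖b x‖ := by
    intro x
    have h1 : (inner ℂ (p x) (p x) : ℂ) = inner ℂ (b x) (b x) := by
      have e1 : (inner ℂ x (p (p x)) : ℂ) = inner ℂ (p x) (p x) := by
        have := LinearMap.adjoint_inner_right p x (p x)
        rwa [hadj_p] at this
      rw [← e1]
      have e2 : (inner ℂ (b x) (b x) : ℂ) = inner ℂ x (LinearMap.adjoint b (b x)) := by
        rw [LinearMap.adjoint_inner_right]
      rw [e2, ← hadj_b]
      congr 1
      have h0 : Matrix.toEuclideanLin (P * P) x = Matrix.toEuclideanLin (Bᴴ * B) x := by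
        rw [hPP]
      rw [toEL_mul, toEL_mul] at h0
      exact h0
    have h2 : (‖p x‖ : ℂ) ^ 2 = (‖b x‖ : ℂ) ^ 2 := by
      rwa [inner_self_eq_norm_sq_to_K, inner_self_eq_norm_sq_to_K] at h1
    have h3 : ‖p x‖ ^ 2 = ‖b x‖ ^ 2 := by exact_mod_cast h2
    nlinarith [norm_nonneg (p x), norm_nonneg (b x)]
  have hker : LinearMap.ker p ≤ LinearMap.ker b := by
    intro x hx
    rw [LinearMap.mem_ker] at hx ⊢
    have := key x
    rw [hx, norm_zero] at this
    exact norm_eq_zero.mp this.symm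
  set L0 : LinearMap.range p →ₗ[ℂ] EuclideanSpace ℂ (Fin n) :=
    (Submodule.liftQ (LinearMap.ker p) b hker).comp
      (LinearMap.quotKerEquivRange p).symm.toLinearMap with hL0def
  have hL0 : ∀ (x : EuclideanSpace ℂ (Fin n)) (h : p x ∈ LinearMap.range p),
      L0 ⟨p x, h⟩ = b x := by
    intro x h
    have h2 : (LinearMap.quotKerEquivRange p).symm ⟨p x, h⟩ = (LinearMap.ker p).mkQ x :=
      LinearMap.quotKerEquivRange_symm_apply_image p x h
    simp only [hL0def, LinearMap.comp_apply, LinearEquiv.coe_toLinearMap, h2,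
      Submodule.mkQ_apply, Submodule.liftQ_apply]
  have hL0norm : ∀ y : LinearMap.range p, ‖L0 y‖ = ‖y‖ := by
    rintro ⟨y, x, rfl⟩
    show ‖L0 ⟨p x, LinearMap.mem_range_self p x⟩‖ = ‖p x‖
    rw [hL0 x]
    exact (key x).symm
  set L : LinearMap.range p →ₗᵢ[ℂ] EuclideanSpace ℂ (Fin n) := ⟨L0, hL0norm⟩ with hLdef
  set u := L.extend with hudef
  set U := Matrix.toEuclideanLin.symm u.toLinearMap with hUdef
  have hUu : Matrix.toEuclideanLin U = u.toLinearMap := by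
    rw [hUdef]; exact Matrix.toEuclideanLin.apply_symm_apply _
  have hUP : U * P = B := by
    apply Matrix.toEuclideanLin.injective
    refine LinearMap.ext fun x => ?_
    rw [toEL_mul, hUu]
    have hmem : p x ∈ LinearMap.range p := LinearMap.mem_range_self p x
    have h3 : u ((⟨p x, hmem⟩ : LinearMap.range p) : EuclideanSpace ℂ (Fin n)) = L ⟨p x, hmem⟩ :=
      L.extend_apply ⟨p x, hmem⟩
    have h4 : L ⟨p x, hmem⟩ = b x := hL0 x hmem
    show u (p x) = b x
    rw [← h4, ← h3]
  refine ⟨U, ?_, hUP.symm⟩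
  rw [Matrix.mem_unitaryGroup_iff']
  have hfin : Matrix.toEuclideanLin (star U * U) =
      Matrix.toEuclideanLin (1 : Matrix (Fin n) (Fin n) ℂ) := by
    refine LinearMap.ext fun x => ?_
    have h1 : Matrix.toEuclideanLin (1 : Matrix (Fin n) (Fin n) ℂ) x = x := by
      simp [Matrix.toEuclideanLin_apply]
    rw [h1, toEL_mul, hUu]
    have hstar : (star U : Matrix (Fin n) (Fin n) ℂ) = Uᴴ := rfl
    rw [hstar, Matrix.toEuclideanLin_conjTranspose_eq_adjoint, hUu]
    apply ext_inner_left ℂ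
    intro y
    rw [LinearMap.adjoint_inner_right]
    exact u.inner_map_map y x
  exact Matrix.toEuclideanLin.injective hfin


section Aux
variable {n : ℕ}

/-- permutation invariance for diagonal matrices -/
lemma N_diag_perm (N : Matrix (Fin n) (Fin n) ℂ → ℝ)
    (hinv : ∀ U V B, U ∈ Matrix.unitaryGroup (Fin n) ℂ →
      V ∈ Matrix.unitaryGroup (Fin n) ℂ → N (U * B * V) = N B)
    (σ : Equiv.Perm (Fin n)) (d : Fin n → ℂ) :
    N (Matrix.diagonal (d ∘ σ)) = N (Matrix.diagonal d) := by
  classical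
  set Pm : Matrix (Fin n) (Fin n) ℂ := Matrix.of (fun i j => if σ i = j then (1:ℂ) else 0)
    with hPmdef
  have hmem : Pm ∈ Matrix.unitaryGroup (Fin n) ℂ := by
    rw [Matrix.mem_unitaryGroup_iff]
    ext i j
    simp only [Matrix.mul_apply, hPmdef, Matrix.of_apply,
      Matrix.star_eq_conjTranspose, Matrix.conjTranspose_apply, Matrix.one_apply]
    have hterm : ∀ l, (if σ i = l then (1:ℂ) else 0) * star (if σ j = l then (1:ℂ) else 0)
        = if l = σ i then (if σ j = σ i then (1:ℂ) else 0) else 0 := by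
      intro l
      by_cases h1 : σ i = l
      · subst h1
        by_cases h2 : σ j = σ i <;> simp [h2]
      · have h1' : ¬ l = σ i := fun hc => h1 hc.symm
        simp [h1, h1']
    rw [Finset.sum_congr rfl (fun l _ => hterm l), Finset.sum_ite_eq' Finset.univ (σ i)]
    simp only [Finset.mem_univ, if_true, EmbeddingLike.apply_eq_iff_eq]
    by_cases h : i = j <;> simp [h, eq_comm]
  have hconj : Pm * Matrix.diagonal d * (star Pm) = Matrix.diagonal (d ∘ σ) := by
    ext i j
    have h0 : Pm * Matrix.diagonal d
        = Matrix.of (fun a l => (if σ a = l then (1:ℂ) else 0) * d l) := by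
      ext a c
      simp [hPmdef, Matrix.mul_diagonal]
    rw [h0]
    simp only [Matrix.mul_apply, hPmdef, Matrix.of_apply,
      Matrix.star_eq_conjTranspose, Matrix.conjTranspose_apply]
    have hterm : ∀ l, (if σ i = l then (1:ℂ) else 0) * d l * star (if σ j = l then (1:ℂ) else 0)
        = if l = σ i then (if σ j = σ i then d (σ i) else 0) else 0 := by
      intro l
      by_cases h1 : σ i = l
      · subst h1
        by_cases h2 : σ j = σ i <;> simp [h2]
      · have h1' : ¬ l = σ i := fun hc => h1 hc.symm
        simp [h1, h1']
    rw [Finset.sum_congr rfl (fun l _ => hterm l), Finset.sum_ite_eq' Finset.univ (σ i)]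
    simp only [Finset.mem_univ, if_true, EmbeddingLike.apply_eq_iff_eq]
    by_cases h : i = j
    · subst h; simp [Matrix.diagonal_apply_eq]
    · simp only [Matrix.diagonal_apply_ne _ h, if_neg (fun hc : j = i => h hc.symm)]
  rw [← hconj]
  exact hinv Pm (star Pm) _ hmem (Unitary.star_mem hmem)

/-- zeroing one diagonal entry decreases N -/
lemma N_diag_update (N : Matrix (Fin n) (Fin n) ℂ → ℝ)
    (hinv : ∀ U V B, U ∈ Matrix.unitaryGroup (Fin n) ℂ →
      V ∈ Matrix.unitaryGroup (Fin n) ℂ → N (U * B * V) = N B)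
    (htri : ∀ B C, N (B + C) ≤ N B + N C)
    (hsmul : ∀ (c : ℂ) B, N (c • B) = ‖c‖ * N B)
    (d : Fin n → ℂ) (j : Fin n) :
    N (Matrix.diagonal (Function.update d j 0)) ≤ N (Matrix.diagonal d) := by
  classical
  set E : Matrix (Fin n) (Fin n) ℂ := Matrix.diagonal (fun i => if i = j then (-1:ℂ) else 1)
    with hEdef
  have hmem : E ∈ Matrix.unitaryGroup (Fin n) ℂ := by
    rw [Matrix.mem_unitaryGroup_iff']
    rw [hEdef, Matrix.star_eq_conjTranspose, Matrix.diagonal_conjTranspose,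
      Matrix.diagonal_mul_diagonal]
    ext i i'
    by_cases h : i = i'
    · subst h
      by_cases hij : i = j <;> simp [Matrix.diagonal_apply_eq, hij, Matrix.one_apply]
    · simp [Matrix.diagonal_apply_ne _ h, Matrix.one_apply_ne h]
  have hED : E * Matrix.diagonal d
      = Matrix.diagonal (fun i => (if i = j then (-1:ℂ) else 1) * d i) := by
    rw [hEdef, Matrix.diagonal_mul_diagonal]
  have hhalf : Matrix.diagonal (Function.update d j 0)
      = (1/2 : ℂ) • (Matrix.diagonal d + E * Matrix.diagonal d) := by
    rw [hED]
    ext i i'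
    by_cases h : i = i'
    · subst h
      by_cases hij : i = j <;>
        simp [Matrix.smul_apply, Matrix.add_apply, Matrix.diagonal_apply_eq,
          Function.update, hij] <;> ring
    · simp [Matrix.smul_apply, Matrix.add_apply, Matrix.diagonal_apply_ne _ h]
  have hE1 : N (E * Matrix.diagonal d) = N (Matrix.diagonal d) := by
    have := hinv E 1 (Matrix.diagonal d) hmem (one_mem _)
    rwa [mul_one] at this
  rw [hhalf, hsmul]
  have habs : ‖(1/2 : ℂ)‖ = 1/2 := by norm_num
  rw [habs]
  have := htri (Matrix.diagonal d) (E * Matrix.diagonal d)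
  rw [hE1] at this
  linarith

/-- zeroing a set of diagonal entries decreases N -/
lemma N_diag_zero_set (N : Matrix (Fin n) (Fin n) ℂ → ℝ)
    (hinv : ∀ U V B, U ∈ Matrix.unitaryGroup (Fin n) ℂ →
      V ∈ Matrix.unitaryGroup (Fin n) ℂ → N (U * B * V) = N B)
    (htri : ∀ B C, N (B + C) ≤ N B + N C)
    (hsmul : ∀ (c : ℂ) B, N (c • B) = ‖c‖ * N B)
    (d : Fin n → ℂ) (S : Finset (Fin n)) :
    N (Matrix.diagonal (fun i => if i ∈ S then 0 else d i)) ≤ N (Matrix.diagonal d) := by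
  classical
  induction S using Finset.induction with
  | empty => simp
  | @insert j S hj ih =>
    have heq : (fun i => if i ∈ insert j S then (0:ℂ) else d i)
        = Function.update (fun i => if i ∈ S then (0:ℂ) else d i) j 0 := by
      funext i
      by_cases hij : i = j
      · subst hij; simp [Function.update]
      · simp [Function.update, hij]
    rw [heq]
    exact le_trans (N_diag_update N hinv htri hsmul _ j) ih

/-- N of a sum is at most the sum of N's -/
lemma N_sum_le (N : Matrix (Fin n) (Fin n) ℂ → ℝ)
    (htri : ∀ B C, N (B + C) ≤ N B + N C)
    (hsmul : ∀ (c : ℂ) B, N (c • B) = ‖c‖ * N B)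
    {ι : Type*} (S : Finset ι) (f : ι → Matrix (Fin n) (Fin n) ℂ) :
    N (∑ i ∈ S, f i) ≤ ∑ i ∈ S, N (f i) := by
  classical
  have hzero : N 0 = 0 := by
    have := hsmul 0 0
    simpa using this
  induction S using Finset.induction with
  | empty => simp [hzero]
  | @insert j S hj ih =>
    rw [Finset.sum_insert hj, Finset.sum_insert hj]
    exact le_trans (htri _ _) (add_le_add_right ih _)

end Aux

set_option maxHeartbeats 1000000 in
/-- N B equals N of the diagonal matrix of singular values -/
lemma N_eq_diag_svals {n : ℕ} (N : Matrix (Fin n) (Fin n) ℂ → ℝ)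
    (hinv : ∀ U V B, U ∈ Matrix.unitaryGroup (Fin n) ℂ →
      V ∈ Matrix.unitaryGroup (Fin n) ℂ → N (U * B * V) = N B)
    (B : Matrix (Fin n) (Fin n) ℂ) :
    N B = N (Matrix.diagonal (fun i => (svals B i : ℂ))) := by
  obtain ⟨U, hU, hB⟩ := exists_polar B
  have hP := Matrix.posSemidef_conjTranspose_mul_self B
  set W := hP.1.eigenvectorUnitary with hWdef
  have hdf : (fun i => (svals B i : ℂ))
      = (RCLike.ofReal ∘ Real.sqrt ∘ hP.1.eigenvalues : Fin n → ℂ) := by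
    funext i
    rfl
  have hsqrt : hP.sqrt = W.1 * Matrix.diagonal (fun i => (svals B i : ℂ)) * (star W.1) := by
    rw [Matrix.PosSemidef.sqrt, hdf]
  have hB2 : B = (U * W.1) * Matrix.diagonal (fun i => (svals B i : ℂ)) * (star W.1) := by
    conv_lhs => rw [hB, hsqrt]
    simp only [Matrix.mul_assoc]
  conv_lhs => rw [hB2]
  exact hinv (U * W.1) (star W.1) _ (mul_mem hU W.2) (Unitary.star_mem W.2)

/-- If a unitarily invariant norm on `M_n(ℂ)` satisfies `‖E₁₁‖ = 1` and
`‖E₁₁ + ⋯ + E_kk‖ = k`, then it dominates the Ky Fan `k`-norm: for every `B`,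
the sum of the `k` largest singular values of `B` is at most `‖B‖`. -/
theorem kyFan_le_norm {n k : ℕ} (hn : 0 < n) (hk : k ≤ n)
    (N : Matrix (Fin n) (Fin n) ℂ → ℝ)
    (hpos : ∀ B, 0 ≤ N B) (hzero : ∀ B, N B = 0 → B = 0)
    (htri : ∀ B C, N (B + C) ≤ N B + N C)
    (hsmul : ∀ (c : ℂ) B, N (c • B) = ‖c‖ * N B)
    (hinv : ∀ U V B, U ∈ Matrix.unitaryGroup (Fin n) ℂ →
      V ∈ Matrix.unitaryGroup (Fin n) ℂ → N (U * B * V) = N B)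
    (hE : N (Matrix.single ⟨0, hn⟩ ⟨0, hn⟩ 1) = 1)
    (hPk : N (partialId n k) = k)
    (B : Matrix (Fin n) (Fin n) ℂ) (s : Fin n → ℝ) (hs : Antitone s)
    (hperm : ∃ σ : Equiv.Perm (Fin n), ∀ i, s i = svals B (σ i)) :
    ∑ j ∈ Finset.univ.filter (fun j : Fin n => (j : ℕ) < k), s j ≤ N B := by
  classical
  rcases Nat.eq_zero_or_pos k with hk0 | hkpos
  · subst hk0
    simp only [Nat.not_lt_zero, Finset.filter_false, Finset.sum_empty]
    exact hpos B
  · obtain ⟨σ, hσ⟩ := hperm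
    have hs0 : ∀ i, 0 ≤ s i := fun i => by rw [hσ i]; exact Real.sqrt_nonneg _
    haveI : NeZero k := ⟨hkpos.ne'⟩
    -- Step 1 : N B = N (diagonal s)
    have h1 : N B = N (Matrix.diagonal (fun i => (s i : ℂ))) := by
      rw [N_eq_diag_svals N hinv B]
      have h2 : (fun i => (s i : ℂ)) = (fun i => ((svals B i : ℂ))) ∘ σ := by
        funext i; simp [hσ i]
      calc N (Matrix.diagonal (fun i => (svals B i : ℂ)))
          = N (Matrix.diagonal ((fun i => ((svals B i : ℂ))) ∘ σ)) :=
            (N_diag_perm N hinv σ _).symm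
        _ = N (Matrix.diagonal (fun i => (s i : ℂ))) := by rw [← h2]
    set t : Fin n → ℂ := fun i => if (i : ℕ) < k then (s i : ℂ) else 0 with htdef
    -- Step 2 : truncation
    have h2 : N (Matrix.diagonal t) ≤ N (Matrix.diagonal (fun i => (s i : ℂ))) := by
      have he : t = fun i =>
          if i ∈ Finset.univ.filter (fun i : Fin n => ¬ (i : ℕ) < k) then 0 else (s i : ℂ) := by
        funext i
        by_cases h : (i : ℕ) < k
        · rw [if_neg (by simp [h]), htdef]
          simp [h]
        · rw [if_pos (by simp [Nat.le_of_not_lt h]), htdef]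
          simp [h]
      rw [he]
      exact N_diag_zero_set N hinv htri hsmul _ _
    -- Step 3 : averaging over cyclic shifts
    set T : ℝ := ∑ j ∈ Finset.univ.filter (fun j : Fin n => (j : ℕ) < k), s j with hTdef
    have hT0 : 0 ≤ T := Finset.sum_nonneg fun i _ => hs0 i
    let e : Fin k ≃ {x : Fin n // (x : ℕ) < k} :=
      { toFun := fun j => ⟨⟨j, lt_of_lt_of_le j.2 hk⟩, j.2⟩
        invFun := fun x => ⟨(x : Fin n), x.2⟩
        left_inv := fun j => rfl
        right_inv := fun x => by ext; rfl }
    let σm : Fin k → Equiv.Perm (Fin n) := fun m => (Equiv.addLeft m).extendDomain e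
    have hσm_lt : ∀ (m : Fin k) (i : Fin n) (h : (i : ℕ) < k),
        σm m i = ((e (m + e.symm ⟨i, h⟩) : {x : Fin n // (x : ℕ) < k}) : Fin n) :=
      fun m i h => Equiv.Perm.extendDomain_apply_subtype _ e h
    have hσm_ge : ∀ (m : Fin k) (i : Fin n), ¬ (i : ℕ) < k → σm m i = i :=
      fun m i h => Equiv.Perm.extendDomain_apply_not_subtype _ e h
    have hTsum : ∑ m : Fin k, Matrix.diagonal (t ∘ σm m) = (T : ℂ) • partialId n k := by
      ext i j
      rw [Matrix.sum_apply]
      by_cases hij : i = j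
      · subst hij
        simp only [Matrix.diagonal_apply_eq, Function.comp_apply, Matrix.smul_apply,
          partialId, Matrix.of_apply, smul_eq_mul]
        by_cases hi : (i : ℕ) < k
        · have hterm : ∀ m : Fin k,
              t (σm m i) = ((s ((e (m + e.symm ⟨i, hi⟩) : {x : Fin n // (x : ℕ) < k}) : Fin n)) : ℂ) := by
            intro m
            rw [hσm_lt m i hi]
            have hlt := (e (m + e.symm ⟨i, hi⟩)).2
            simp only [htdef, if_pos hlt]
          rw [Finset.sum_congr rfl (fun m _ => hterm m)]
          have hre : ∑ m : Fin k,
              ((s ((e (m + e.symm ⟨i, hi⟩) : {x : Fin n // (x : ℕ) < k}) : Fin n)) : ℂ)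
              = ∑ m : Fin k, ((s ((e m : {x : Fin n // (x : ℕ) < k}) : Fin n)) : ℂ) :=
            Fintype.sum_equiv (Equiv.addRight (e.symm ⟨i, hi⟩)) _ _ (fun m => rfl)
          have hTe : ∑ m : Fin k, s ((e m : {x : Fin n // (x : ℕ) < k}) : Fin n) = T := by
            calc ∑ m : Fin k, s ((e m : {x : Fin n // (x : ℕ) < k}) : Fin n)
                = ∑ x : {x : Fin n // (x : ℕ) < k}, s (x : Fin n) :=
                  Fintype.sum_equiv e _ _ (fun m => rfl)
              _ = T := by
                  rw [hTdef]
                  exact (Finset.sum_subtype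
                    (Finset.univ.filter fun j : Fin n => (j : ℕ) < k)
                    (fun x => by simp) s).symm
          rw [hre, ← hTe]
          push_cast
          simp [hi]
        · have hterm : ∀ m : Fin k, t (σm m i) = 0 := by
            intro m
            rw [hσm_ge m i hi]
            simp only [htdef, if_neg hi]
          rw [Finset.sum_congr rfl (fun m _ => hterm m)]
          simp [hi]
      · simp only [Matrix.diagonal_apply_ne _ hij, Matrix.smul_apply, partialId,
          Matrix.of_apply, smul_eq_mul]
        rw [if_neg (fun hc => hij hc.1)]
        simp
    have hsum_le : N ((T : ℂ) • partialId n k) ≤ (k : ℝ) * N (Matrix.diagonal t) := by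
      rw [← hTsum]
      refine le_trans (N_sum_le N htri hsmul _ _) ?_
      have heach : ∀ m : Fin k, N (Matrix.diagonal (t ∘ σm m)) = N (Matrix.diagonal t) :=
        fun m => N_diag_perm N hinv (σm m) t
      rw [Finset.sum_congr rfl (fun m _ => heach m), Finset.sum_const, Finset.card_univ,
        Fintype.card_fin]
      simp [nsmul_eq_mul]
    have hlhs : N ((T : ℂ) • partialId n k) = T * k := by
      rw [hsmul, hPk, Complex.norm_real, Real.norm_eq_abs, abs_of_nonneg hT0]
    have hkpos' : (0 : ℝ) < k := by exact_mod_cast hkpos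
    have hTle : T ≤ N (Matrix.diagonal t) := by
      rw [hlhs] at hsum_le
      nlinarith
    calc T ≤ N (Matrix.diagonal t) := hTle
      _ ≤ N (Matrix.diagonal (fun i => (s i : ℂ))) := h2
      _ = N B := h1.symm
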